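/- For any probability measure μ on ℝ^d and any x ∈ ℝ^d, the Tukey depth of x equals 1 − sup{μ(B) : B a closed ball with x ∉ B}; i.e., the family of closed halfspaces and the family of closed balls are depth-equivalent. -/

import Mathlib

open MeasureTheory
open scoped ENNReal RealInnerProductSpace

def IsOpenHalfspace {d : ℕ} (H : Set (EuclideanSpace ℝ (Fin d))) : Prop :=
  ∃ (u : EuclideanSpace ℝ (Fin d)) (c : ℝ), u ≠ 0 ∧ H = {y | c < ⟪u, y⟫}

theorem tukey_depth_eq_ball_depth (d : ℕ) (hd : 0 < d)
    (μ : Measure (EuclideanSpace ℝ (Fin d))) [IsProbabilityMeasure μ]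
    (x : EuclideanSpace ℝ (Fin d)) :
    (⨅ (H : Set (EuclideanSpace ℝ (Fin d))) (_ : IsOpenHalfspace H) (_ : x ∈ H), μ H) =
      1 - ⨆ (c : EuclideanSpace ℝ (Fin d)) (r : ℝ) (_ : 0 ≤ r)
            (_ : x ∉ Metric.closedBall c r), μ (Metric.closedBall c r) := by
  classical
  let E := EuclideanSpace ℝ (Fin d)
  set I : ℝ≥0∞ := ⨅ (H : Set E) (_ : IsOpenHalfspace H) (_ : x ∈ H), μ H with hIdef
  set S : ℝ≥0∞ := ⨆ (c : E) (r : ℝ) (_ : 0 ≤ r)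
      (_ : x ∉ Metric.closedBall c r), μ (Metric.closedBall c r) with hSdef
  -- basic facts about halfspaces
  have hopen : ∀ (u : E) (c : ℝ), IsOpen {y : E | c < ⟪u, y⟫} := by
    intro u c
    exact isOpen_lt continuous_const (Continuous.inner continuous_const continuous_id)
  have hIle : ∀ (u : E) (c : ℝ), u ≠ 0 → x ∈ {y : E | c < ⟪u, y⟫} →
      I ≤ μ {y : E | c < ⟪u, y⟫} := by
    intro u c hu hx
    refine (iInf_le _ {y : E | c < ⟪u, y⟫}).trans ?_
    rw [iInf_pos ⟨u, c, hu, rfl⟩, iInf_pos hx]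
  apply le_antisymm
  · -- I ≤ 1 - S
    have hI1 : I ≤ 1 := by
      set u : E := EuclideanSpace.single ⟨0, hd⟩ (1 : ℝ) with hu
      have hune : u ≠ 0 := by
        intro h
        have h2 : ‖u‖ = 1 := by rw [hu, EuclideanSpace.norm_single]; norm_num
        rw [h] at h2; simp at h2
      have hx : x ∈ {y : E | ⟪u, x⟫ - 1 < ⟪u, y⟫} := by
        show ⟪u, x⟫ - 1 < ⟪u, x⟫; linarith
      exact (hIle u (⟪u, x⟫ - 1) hune hx).trans (prob_le_one)
    have hSle : S ≤ 1 - I := by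
      refine iSup_le fun z => iSup_le fun r => iSup_le fun hr => iSup_le fun hx => ?_
      have hrd : r < dist x z := by
        by_contra h
        exact hx (Metric.mem_closedBall.mpr (le_of_not_gt h))
      set u : E := x - z with hu
      have hnu : ‖u‖ = dist x z := by rw [hu, dist_eq_norm]
      have hupos : 0 < ‖u‖ := by rw [hnu]; linarith
      set c' : ℝ := ⟪u, z⟫ + r * ‖u‖ with hc'
      have hxH : x ∈ {y : E | c' < ⟪u, y⟫} := by
        simp only [Set.mem_setOf_eq, hc']
        have : ⟪u, x⟫ - ⟪u, z⟫ = ⟪u, x - z⟫ := by rw [inner_sub_right]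
        have h2 : ⟪u, x - z⟫ = ‖u‖ ^ 2 := by
          rw [← hu, real_inner_self_eq_norm_sq]
        have h3 : r < ‖u‖ := by rw [hnu]; exact hrd
        show ⟪u, z⟫ + r * ‖u‖ < ⟪u, x⟫
        nlinarith [mul_lt_mul_of_pos_left h3 hupos]
      have hsub : Metric.closedBall z r ⊆ {y : E | c' < ⟪u, y⟫}ᶜ := by
        intro y hy
        simp only [Set.mem_compl_iff, Set.mem_setOf_eq, not_lt, hc']
        have h1 : ⟪u, y⟫ - ⟪u, z⟫ = ⟪u, y - z⟫ := by rw [inner_sub_right]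
        have h2 : ⟪u, y - z⟫ ≤ ‖u‖ * ‖y - z‖ := real_inner_le_norm u (y - z)
        have h3 : ‖y - z‖ ≤ r := by rwa [← dist_eq_norm, ← Metric.mem_closedBall]
        nlinarith
      have hmeas : MeasurableSet {y : E | c' < ⟪u, y⟫} := (hopen u c').measurableSet
      calc μ (Metric.closedBall z r) ≤ μ ({y : E | c' < ⟪u, y⟫}ᶜ) := measure_mono hsub
        _ = 1 - μ {y : E | c' < ⟪u, y⟫} := by
            rw [measure_compl hmeas (measure_ne_top μ _), measure_univ]
        _ ≤ 1 - I := tsub_le_tsub_left (hIle u c' (by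
              intro h
              rw [h] at hupos
              simp at hupos) hxH) 1
    calc I = 1 - (1 - I) := (ENNReal.sub_sub_cancel ENNReal.one_ne_top hI1).symm
      _ ≤ 1 - S := tsub_le_tsub_left hSle 1
  · -- 1 - S ≤ I
    refine le_iInf fun H => le_iInf fun hH => le_iInf fun hxH => ?_
    obtain ⟨u, c, hu, rfl⟩ := hH
    have hc : c < ⟪u, x⟫ := hxH
    set ε : ℝ := (⟪u, x⟫ - c) / 2 with hε
    have hεpos : 0 < ε := by rw [hε]; linarith
    set c₂ : ℝ := c + ε with hc₂
    have hupos : 0 < ‖u‖ := norm_pos_iff.mpr hu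
    set w : E := (c₂ / ‖u‖ ^ 2) • u with hw
    have hiw : ⟪u, w⟫ = c₂ := by
      rw [hw, real_inner_smul_right, real_inner_self_eq_norm_sq]
      field_simp
    set B : ℕ → Set E := fun n => Metric.closedBall (w - (n : ℝ) • u) (n * ‖u‖) with hB
    have hdist : ∀ (y : E) (t : ℝ),
        dist y (w - t • u) ^ 2 = ‖y - w‖ ^ 2 + 2 * t * (⟪u, y⟫ - c₂) + t ^ 2 * ‖u‖ ^ 2 := by
      intro y t
      have hsplit : y - (w - t • u) = (y - w) + t • u := by module
      rw [dist_eq_norm, hsplit, norm_add_sq_real, real_inner_smul_right, norm_smul]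
      have h1 : ⟪y - w, u⟫ = ⟪u, y⟫ - c₂ := by
        rw [inner_sub_left, real_inner_comm u y, real_inner_comm u w, hiw]
      rw [h1]
      simp [mul_pow, sq_abs]
      ring
    have hxw : x ≠ w := by
      intro h
      have : ⟪u, x⟫ = c₂ := by rw [h, hiw]
      rw [hc₂, hε] at this; linarith
    have hxB : ∀ n, x ∉ B n := by
      intro n hmem
      have h1 : dist x (w - (n : ℝ) • u) ≤ n * ‖u‖ := Metric.mem_closedBall.mp hmem
      have h2 : dist x (w - (n : ℝ) • u) ^ 2 ≤ (n * ‖u‖) ^ 2 := by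
        have := dist_nonneg (x := x) (y := w - (n : ℝ) • u)
        nlinarith
      rw [hdist x n] at h2
      have h3 : ⟪u, x⟫ - c₂ = ε := by rw [hc₂, hε]; ring
      have h4 : 0 < ‖x - w‖ := by
        rw [norm_pos_iff, sub_ne_zero]; exact hxw
      have hn : (0 : ℝ) ≤ n := Nat.cast_nonneg n
      nlinarith
    have hmono : Monotone B := by
      intro m n hmn y hy
      have h1 : dist y (w - (m : ℝ) • u) ≤ m * ‖u‖ := Metric.mem_closedBall.mp hy
      have h2 : dist (w - (m : ℝ) • u) (w - (n : ℝ) • u) = ((n : ℝ) - m) * ‖u‖ := by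
        rw [dist_eq_norm]
        have : (w - (m : ℝ) • u) - (w - (n : ℝ) • u) = ((n : ℝ) - m) • u := by module
        rw [this, norm_smul, Real.norm_eq_abs, abs_of_nonneg]
        have : (m : ℝ) ≤ n := Nat.cast_le.mpr hmn
        linarith
      refine Metric.mem_closedBall.mpr ?_
      calc dist y (w - (n : ℝ) • u)
          ≤ dist y (w - (m : ℝ) • u) + dist (w - (m : ℝ) • u) (w - (n : ℝ) • u) :=
            dist_triangle _ _ _
        _ ≤ m * ‖u‖ + ((n : ℝ) - m) * ‖u‖ := by rw [h2]; linarith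
        _ = n * ‖u‖ := by ring
    have hcover : {y : E | ⟪u, y⟫ ≤ c} ⊆ ⋃ n, B n := by
      intro y hy
      have hyc : ⟪u, y⟫ ≤ c := hy
      set δ : ℝ := c₂ - ⟪u, y⟫ with hδ
      have hδε : ε ≤ δ := by rw [hδ, hc₂]; linarith
      set n : ℕ := ⌈‖y - w‖ ^ 2 / (2 * ε)⌉₊ with hn
      have hnge : ‖y - w‖ ^ 2 / (2 * ε) ≤ n := Nat.le_ceil _
      have hnn : (0 : ℝ) ≤ n := Nat.cast_nonneg n
      refine Set.mem_iUnion.mpr ⟨n, Metric.mem_closedBall.mpr ?_⟩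
      have hsq : dist y (w - (n : ℝ) • u) ^ 2 ≤ (n * ‖u‖) ^ 2 := by
        rw [hdist y n]
        have h1 : ‖y - w‖ ^ 2 ≤ n * (2 * ε) := by
          rw [div_le_iff₀ (by linarith)] at hnge; linarith
        have h2 : ⟪u, y⟫ - c₂ = -δ := by rw [hδ]; ring
        rw [h2]
        nlinarith
      have hd0 := dist_nonneg (x := y) (y := w - (n : ℝ) • u)
      have hr0 : (0 : ℝ) ≤ n * ‖u‖ := by positivity
      nlinarith
    have hμcompl : μ {y : E | ⟪u, y⟫ ≤ c} ≤ S := by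
      calc μ {y : E | ⟪u, y⟫ ≤ c} ≤ μ (⋃ n, B n) := measure_mono hcover
        _ = ⨆ n, μ (B n) := hmono.directed_le.measure_iUnion
        _ ≤ S := by
            refine iSup_le fun n => ?_
            refine le_iSup_of_le (w - (n : ℝ) • u) ?_
            refine le_iSup_of_le ((n : ℝ) * ‖u‖) ?_
            refine le_iSup_of_le (by positivity) ?_
            exact le_iSup_of_le (hxB n) le_rfl
    have hmeas : MeasurableSet {y : E | c < ⟪u, y⟫} := (hopen u c).measurableSet
    have hcompl : {y : E | ⟪u, y⟫ ≤ c} = {y : E | c < ⟪u, y⟫}ᶜ := by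
      ext y; simp [not_lt]
    have hμH : μ ({y : E | c < ⟪u, y⟫}ᶜ) = 1 - μ {y : E | c < ⟪u, y⟫} := by
      rw [measure_compl hmeas (measure_ne_top μ _), measure_univ]
    calc (1 : ℝ≥0∞) - S ≤ 1 - μ {y : E | ⟪u, y⟫ ≤ c} := tsub_le_tsub_left hμcompl 1
      _ = 1 - (1 - μ {y : E | c < ⟪u, y⟫}) := by rw [hcompl, hμH]
      _ = μ {y : E | c < ⟪u, y⟫} := ENNReal.sub_sub_cancel ENNReal.one_ne_top (prob_le_one)
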